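/- (Theorem propgen, elliptic equation with characteristics) For all τ ∈ ℍ, ζ ∈ V_ℂ, λ₀ ∈ L*, α, β ∈ V and σ, ν ∈ L one has θ_{λ₀+L}(τ, ζ + τ·σ_{v₊} + conj(τ)·σ_{v₋} + ν; (α,β); v) = e(−τ·σ_{v₊}²/2 − conj(τ)·σ_{v₋}²/2 − B(σ, ζ) + B(ν, β) + B(σ, α))·θ_{λ₀+L}(τ, ζ; (α,β); v). -/

import Mathlib

/-!
Common setup: Jacobi--Siegel theta functions of an even lattice `L` of indefinite
signature, with respect to a Grassmannian element `v = (v₊, v₋)`.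

We model the real quadratic space `V` concretely as `ι → ℝ` (`ι` finite), its
complexification `V_ℂ` as `ι → ℂ`, the bilinear form `B` as a plain function
(with bilinearity imposed as a hypothesis), the lattice `L` as a `ℤ`-submodule,
and the projections onto `v₊` and `v₋` as plain functions (with the projection
properties imposed as hypotheses).
-/

noncomputable section

namespace JacobiIndef

/-- `e(w) = exp(2 π i w)`. -/
def eC (w : ℂ) : ℂ := Complex.exp (2 * (Real.pi : ℂ) * Complex.I * w)

variable {ι : Type*} [Fintype ι]

/-- Inclusion of real vectors into the complexification. -/
def cV (x : ι → ℝ) : ι → ℂ := fun i => (x i : ℂ)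

/-- Real part of a complex vector. -/
def reV (z : ι → ℂ) : ι → ℝ := fun i => (z i).re

/-- Imaginary part of a complex vector. -/
def imV (z : ι → ℂ) : ι → ℝ := fun i => (z i).im

/-- The ℂ-linear extension of a real map `p`, acting on complex vectors. -/
def mapC (p : (ι → ℝ) → (ι → ℝ)) (z : ι → ℂ) : ι → ℂ :=
  cV (p (reV z)) + Complex.I • cV (p (imV z))

/-- `B(x, ζ)` for a real vector `x` and a complex vector `ζ` (ℂ-linear in `ζ`). -/
def pairC (B : (ι → ℝ) → (ι → ℝ) → ℝ) (x : ι → ℝ) (z : ι → ℂ) : ℂ :=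
  (B x (reV z) : ℂ) + Complex.I * (B x (imV z) : ℂ)

/-- The ℂ-bilinear extension of `B` to complex vectors. -/
def pairCC (B : (ι → ℝ) → (ι → ℝ) → ℝ) (z w : ι → ℂ) : ℂ :=
  ((B (reV z) (reV w) - B (imV z) (imV w) : ℝ) : ℂ)
    + Complex.I * ((B (reV z) (imV w) + B (imV z) (reV w) : ℝ) : ℂ)

/-- `B` is a symmetric bilinear form on `ι → ℝ`. -/
def IsSymmBilin (B : (ι → ℝ) → (ι → ℝ) → ℝ) : Prop :=
  (∀ x y z, B (x + y) z = B x z + B y z) ∧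
  (∀ (c : ℝ) (x y), B (c • x) y = c * B x y) ∧
  (∀ x y, B x y = B y x)

/-- `B` is nondegenerate. -/
def Nondeg (B : (ι → ℝ) → (ι → ℝ) → ℝ) : Prop :=
  ∀ x, (∀ y, B x y = 0) → x = 0

/-- `pp`, `pm` are the projections of a Grassmannian element: an orthogonal
decomposition `V = v₊ ⊕ v₋` with `B` positive definite on `v₊ = range pp` and
negative definite on `v₋ = range pm`. -/
def IsGrass (B : (ι → ℝ) → (ι → ℝ) → ℝ) (pp pm : (ι → ℝ) → (ι → ℝ)) : Prop :=
  (∀ x y, pp (x + y) = pp x + pp y) ∧ (∀ (c : ℝ) (x), pp (c • x) = c • pp x) ∧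
  (∀ x y, pm (x + y) = pm x + pm y) ∧ (∀ (c : ℝ) (x), pm (c • x) = c • pm x) ∧
  (∀ x, pp x + pm x = x) ∧ (∀ x, pp (pp x) = pp x) ∧ (∀ x, pm (pm x) = pm x) ∧
  (∀ x y, B (pp x) (pm y) = 0) ∧
  (∀ x, pp x ≠ 0 → 0 < B (pp x) (pp x)) ∧
  (∀ x, pm x ≠ 0 → B (pm x) (pm x) < 0)

/-- `L` is a full lattice: the ℤ-span of an ℝ-basis of `V`. -/
def IsFullLattice (L : Submodule ℤ (ι → ℝ)) : Prop :=
  ∃ b : Module.Basis ι ℝ (ι → ℝ), L = Submodule.span ℤ (Set.range ⇑b)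

/-- `L` is even with respect to `B`: integral pairings and even norms. -/
def IsEvenLat (B : (ι → ℝ) → (ι → ℝ) → ℝ) (L : Submodule ℤ (ι → ℝ)) : Prop :=
  (∀ x ∈ L, ∀ y ∈ L, ∃ n : ℤ, B x y = (n : ℝ)) ∧
  (∀ x ∈ L, ∃ n : ℤ, B x x = 2 * (n : ℝ))

/-- The dual lattice `L* = {x | B(x, L) ⊆ ℤ}`, as a set. -/
def dualSet (B : (ι → ℝ) → (ι → ℝ) → ℝ) (L : Submodule ℤ (ι → ℝ)) : Set (ι → ℝ) :=
  {x | ∀ m ∈ L, ∃ n : ℤ, B x m = (n : ℝ)}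

/-- The equivalence relation "congruent modulo `L`" on a set `S` of vectors. -/
def cosetSetoid (L : Submodule ℤ (ι → ℝ)) (S : Set (ι → ℝ)) : Setoid S where
  r x y := (x : ι → ℝ) - (y : ι → ℝ) ∈ L
  iseqv := by
    refine ⟨fun x => by simp, fun {x y} h => ?_, fun {x y z} h1 h2 => ?_⟩
    · have := L.neg_mem h
      simpa [neg_sub] using this
    · have := L.add_mem h1 h2
      rwa [sub_add_sub_cancel] at this

/-- The set of cosets of `L` in `S` (e.g. `D_L = L*/L`). -/
def DiscT (L : Submodule ℤ (ι → ℝ)) (S : Set (ι → ℝ)) : Type _ :=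
  Quotient (cosetSetoid L S)

/-- The discriminant group `D_L = L*/L` (as a type of cosets). -/
def Disc (B : (ι → ℝ) → (ι → ℝ) → ℝ) (L : Submodule ℤ (ι → ℝ)) : Type _ :=
  DiscT L (dualSet B L)

/-- A representative of a coset. -/
def qRep {L : Submodule ℤ (ι → ℝ)} {S : Set (ι → ℝ)} (q : DiscT L S) : ι → ℝ :=
  (Quotient.out (s := cosetSetoid L S) q).1

/-- The class of an element in a coset space. -/
def mkD {L : Submodule ℤ (ι → ℝ)} {S : Set (ι → ℝ)} (x : ι → ℝ) (hx : x ∈ S) :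
    DiscT L S :=
  Quotient.mk (cosetSetoid L S) ⟨x, hx⟩

/-- The Jacobi--Siegel theta component
`θ_{λ₀+L}(τ, ζ; v) = Σ_{λ ∈ λ₀+L} e(τ λ_{v₊}²/2 + τ̄ λ_{v₋}²/2 + B(λ, ζ))`. -/
def theta (B : (ι → ℝ) → (ι → ℝ) → ℝ) (pp pm : (ι → ℝ) → (ι → ℝ))
    (L : Submodule ℤ (ι → ℝ)) (lam0 : ι → ℝ) (τ : ℂ) (ζ : ι → ℂ) : ℂ :=
  ∑' μ : L, eC (τ * (B (pp (lam0 + (μ : ι → ℝ))) (pp (lam0 + (μ : ι → ℝ))) : ℂ) / 2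
    + (starRingEnd ℂ) τ * (B (pm (lam0 + (μ : ι → ℝ))) (pm (lam0 + (μ : ι → ℝ))) : ℂ) / 2
    + pairC B (lam0 + (μ : ι → ℝ)) ζ)

/-- The Jacobi--Siegel theta component with characteristics `(α, β)`. -/
def thetaChar (B : (ι → ℝ) → (ι → ℝ) → ℝ) (pp pm : (ι → ℝ) → (ι → ℝ))
    (L : Submodule ℤ (ι → ℝ)) (lam0 α β : ι → ℝ) (τ : ℂ) (ζ : ι → ℂ) : ℂ :=
  ∑' μ : L,
    eC (τ * (B (pp (lam0 + (μ : ι → ℝ) + β)) (pp (lam0 + (μ : ι → ℝ) + β)) : ℂ) / 2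
      + (starRingEnd ℂ) τ
          * (B (pm (lam0 + (μ : ι → ℝ) + β)) (pm (lam0 + (μ : ι → ℝ) + β)) : ℂ) / 2
      + pairC B (lam0 + (μ : ι → ℝ) + β) ζ
      - (B (lam0 + (μ : ι → ℝ) + (2⁻¹ : ℝ) • β) α : ℂ))

/-- The normalized theta with characteristics `θ̂ = e(-B(α,β)/2)·θ(·;(α,β);·)`. -/
def thetaHat (B : (ι → ℝ) → (ι → ℝ) → ℝ) (pp pm : (ι → ℝ) → (ι → ℝ))
    (L : Submodule ℤ (ι → ℝ)) (lam0 α β : ι → ℝ) (τ : ℂ) (ζ : ι → ℂ) : ℂ :=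
  eC (-(B α β : ℂ) / 2) * thetaChar B pp pm L lam0 α β τ ζ

/-- The elliptic functional equation for index `(L, v)`. -/
def SatElliptic (B : (ι → ℝ) → (ι → ℝ) → ℝ) (pp pm : (ι → ℝ) → (ι → ℝ))
    (L : Submodule ℤ (ι → ℝ)) (Φ : ℂ → (ι → ℂ) → ℂ) : Prop :=
  ∀ τ : ℂ, 0 < τ.im → ∀ ζ : ι → ℂ, ∀ σ ∈ L, ∀ ν ∈ L,
    Φ τ (ζ + τ • cV (pp σ) + (starRingEnd ℂ) τ • cV (pm σ) + cV ν)
      = eC (-(τ * (B (pp σ) (pp σ) : ℂ) / 2)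
            - (starRingEnd ℂ) τ * (B (pm σ) (pm σ) : ℂ) / 2
            - pairC B σ ζ) * Φ τ ζ

/-- The modular functional equation of (doubled) weight `(k2/2, l2/2)` for a matrix
`A = [[a,b],[c,d]]` with chosen square root `φ` of `j(A, ·)`, and index `(L, v)`. -/
def SatModular (B : (ι → ℝ) → (ι → ℝ) → ℝ) (pp pm : (ι → ℝ) → (ι → ℝ))
    (k2 l2 : ℤ) (a b c d : ℤ) (φ : ℂ → ℂ) (Φ : ℂ → (ι → ℂ) → ℂ) : Prop :=
  ∀ τ : ℂ, 0 < τ.im → ∀ ζ : ι → ℂ,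
    Φ (((a : ℂ) * τ + (b : ℂ)) / ((c : ℂ) * τ + (d : ℂ)))
      (((c : ℂ) * τ + (d : ℂ))⁻¹ • mapC pp ζ
        + ((starRingEnd ℂ) ((c : ℂ) * τ + (d : ℂ)))⁻¹ • mapC pm ζ)
      = φ τ ^ k2 * (starRingEnd ℂ) (φ τ) ^ l2
        * eC ((c : ℂ) * pairCC B (mapC pp ζ) (mapC pp ζ)
                / (2 * ((c : ℂ) * τ + (d : ℂ)))
              + (c : ℂ) * pairCC B (mapC pm ζ) (mapC pm ζ)
                / (2 * (starRingEnd ℂ) ((c : ℂ) * τ + (d : ℂ))))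
        * Φ τ ζ

/-- Complex directional derivative in the `ζ` variable, in the direction of a real
vector `w`. -/
def dirDeriv (w : ι → ℝ) (f : (ι → ℂ) → ℂ) (ζ : ι → ℂ) : ℂ :=
  deriv (fun z : ℂ => f (ζ + z • cV w)) 0

/-- The holomorphic Laplacian `Δ^h` attached to a basis `ws` with `B`-dual basis
`wds`. -/
def lapl {n : ℕ} (ws wds : Fin n → (ι → ℝ)) (f : (ι → ℂ) → ℂ) (ζ : ι → ℂ) : ℂ :=
  ∑ i : Fin n, dirDeriv (ws i) (fun ζ' => dirDeriv (wds i) f ζ') ζ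

/-- The Wirtinger derivative `∂_τ = (∂_x - i ∂_y)/2`. -/
def wirtD (g : ℂ → ℂ) (τ : ℂ) : ℂ :=
  (fderiv ℝ g τ 1 - Complex.I * fderiv ℝ g τ Complex.I) / 2

/-- The Wirtinger derivative `∂_{τ̄} = (∂_x + i ∂_y)/2`. -/
def wirtDBar (g : ℂ → ℂ) (τ : ℂ) : ℂ :=
  (fderiv ℝ g τ 1 + Complex.I * fderiv ℝ g τ Complex.I) / 2

/-- `ws`, `wds` form a basis of the subspace `range p` together with its `B`-dual
basis. -/
def IsDualBasisOf (B : (ι → ℝ) → (ι → ℝ) → ℝ) (p : (ι → ℝ) → (ι → ℝ))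
    {n : ℕ} (ws wds : Fin n → (ι → ℝ)) : Prop :=
  (∀ i, p (ws i) = ws i) ∧ (∀ i, p (wds i) = wds i) ∧
  LinearIndependent ℝ ws ∧
  Submodule.span ℝ (Set.range ws) = Submodule.span ℝ (Set.range p) ∧
  (∀ i j, B (ws i) (wds j) = if i = j then (1 : ℝ) else 0)


section MyAux16

variable {ι : Type*} [Fintype ι]

lemma my16_eC_add (a b : ℂ) : eC (a + b) = eC a * eC b := by
  rw [eC, eC, eC, ← Complex.exp_add]; ring_nf

lemma my16_eC_int (n : ℤ) : eC (n : ℂ) = 1 := by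
  rw [eC]
  rw [show 2 * (Real.pi : ℂ) * Complex.I * (n : ℂ) = (n : ℤ) * (2 * Real.pi * Complex.I) by
    push_cast; ring]
  exact Complex.exp_int_mul_two_pi_mul_I n

lemma my16_reV_add (z w : ι → ℂ) : reV (z + w) = reV z + reV w := by
  funext i; simp [reV]

lemma my16_imV_add (z w : ι → ℂ) : imV (z + w) = imV z + imV w := by
  funext i; simp [imV]

lemma my16_reV_cV (x : ι → ℝ) : reV (cV x) = x := by funext i; simp [reV, cV]

lemma my16_imV_cV (x : ι → ℝ) : imV (cV x) = 0 := by funext i; simp [imV, cV]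

lemma my16_reV_smul_cV (c : ℂ) (x : ι → ℝ) : reV (c • cV x) = c.re • x := by
  funext i; simp [reV, cV, Complex.mul_re]

lemma my16_imV_smul_cV (c : ℂ) (x : ι → ℝ) : imV (c • cV x) = c.im • x := by
  funext i; simp [imV, cV, Complex.mul_im]

end MyAux16

/-- Theorem propgen, elliptic equation with characteristics:
the theta function with characteristics `(α,β)` satisfies
`θ(τ, ζ + τσ₊ + τ̄σ₋ + ν; (α,β); v) = e(-τσ₊²/2 - τ̄σ₋²/2 - B(σ,ζ) + B(ν,β) + B(σ,α))·θ(τ,ζ;(α,β);v)`. -/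
theorem statement_16 (B : (ι → ℝ) → (ι → ℝ) → ℝ) (pp pm : (ι → ℝ) → (ι → ℝ))
    (L : Submodule ℤ (ι → ℝ))
    (hB : IsSymmBilin B) (hBnd : Nondeg B) (hG : IsGrass B pp pm)
    (hL : IsFullLattice L) (hE : IsEvenLat B L)
    (τ : ℂ) (hτ : 0 < τ.im) (ζ : ι → ℂ)
    (lam0 : ι → ℝ) (hlam0 : lam0 ∈ dualSet B L) (α β : ι → ℝ)
    (σ : ι → ℝ) (hσ : σ ∈ L) (ν : ι → ℝ) (hν : ν ∈ L) :
    thetaChar B pp pm L lam0 α β τ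
        (ζ + τ • cV (pp σ) + (starRingEnd ℂ) τ • cV (pm σ) + cV ν)
      = eC (-(τ * (B (pp σ) (pp σ) : ℂ) / 2)
            - (starRingEnd ℂ) τ * (B (pm σ) (pm σ) : ℂ) / 2
            - pairC B σ ζ + (B ν β : ℂ) + (B σ α : ℂ))
          * thetaChar B pp pm L lam0 α β τ ζ := by
  obtain ⟨hBadd, hBsmul, hBsymm⟩ := hB
  obtain ⟨hppadd, -, hpmadd, -, hsum, -, -, horth, -, -⟩ := hG
  obtain ⟨hEint, -⟩ := hE
  have hBadd' : ∀ x y z, B x (y + z) = B x y + B x z := fun x y z => by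
    rw [hBsymm, hBadd, hBsymm y x, hBsymm z x]
  have hBsmul' : ∀ (c : ℝ) (x y), B x (c • y) = c * B x y := fun c x y => by
    rw [hBsymm, hBsmul, hBsymm y x]
  have hB0 : ∀ x, B x (0 : ι → ℝ) = 0 := fun x => by
    have h := hBsmul' 0 x 0
    simpa using h
  have pairR : ∀ x y : ι → ℝ, pairC B x (cV y) = (B x y : ℂ) := fun x y => by
    rw [pairC, my16_reV_cV, my16_imV_cV, hB0]; simp
  have pairS : ∀ (c : ℂ) (x y : ι → ℝ), pairC B x (c • cV y) = c * (B x y : ℂ) := by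
    intro c x y
    rw [pairC, my16_reV_smul_cV, my16_imV_smul_cV, hBsmul', hBsmul']
    push_cast
    linear_combination (B x y : ℂ) * Complex.re_add_im c
  have pairAdd : ∀ (x : ι → ℝ) (z w : ι → ℂ),
      pairC B x (z + w) = pairC B x z + pairC B x w := fun x z w => by
    rw [pairC, pairC, pairC, my16_reV_add, my16_imV_add, hBadd', hBadd']
    push_cast; ring
  have pairAddL : ∀ (x y : ι → ℝ) (z : ι → ℂ),
      pairC B (x + y) z = pairC B x z + pairC B y z := fun x y z => by
    rw [pairC, pairC, pairC, hBadd, hBadd]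
    push_cast; ring
  set σ0 : L := ⟨σ, hσ⟩ with hσ0
  have key : ∀ μ : L,
      eC (τ * (B (pp (lam0 + (μ : ι → ℝ) + β)) (pp (lam0 + (μ : ι → ℝ) + β)) : ℂ) / 2
        + (starRingEnd ℂ) τ
            * (B (pm (lam0 + (μ : ι → ℝ) + β)) (pm (lam0 + (μ : ι → ℝ) + β)) : ℂ) / 2
        + pairC B (lam0 + (μ : ι → ℝ) + β)
            (ζ + τ • cV (pp σ) + (starRingEnd ℂ) τ • cV (pm σ) + cV ν)
        - (B (lam0 + (μ : ι → ℝ) + (2⁻¹ : ℝ) • β) α : ℂ))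
      = eC (-(τ * (B (pp σ) (pp σ) : ℂ) / 2)
            - (starRingEnd ℂ) τ * (B (pm σ) (pm σ) : ℂ) / 2
            - pairC B σ ζ + (B ν β : ℂ) + (B σ α : ℂ))
        * eC (τ * (B (pp (lam0 + ((μ + σ0 : L) : ι → ℝ) + β))
                  (pp (lam0 + ((μ + σ0 : L) : ι → ℝ) + β)) : ℂ) / 2
          + (starRingEnd ℂ) τ * (B (pm (lam0 + ((μ + σ0 : L) : ι → ℝ) + β))
                  (pm (lam0 + ((μ + σ0 : L) : ι → ℝ) + β)) : ℂ) / 2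
          + pairC B (lam0 + ((μ + σ0 : L) : ι → ℝ) + β) ζ
          - (B (lam0 + ((μ + σ0 : L) : ι → ℝ) + (2⁻¹ : ℝ) • β) α : ℂ)) := by
    intro μ
    obtain ⟨n1, hn1⟩ := hlam0 ν hν
    obtain ⟨n2, hn2⟩ := hEint (μ : ι → ℝ) μ.2 ν hν
    have hn1' : ((B lam0 ν : ℝ) : ℂ) = (n1 : ℂ) := by exact_mod_cast hn1
    have hn2' : ((B (μ : ι → ℝ) ν : ℝ) : ℂ) = (n2 : ℂ) := by exact_mod_cast hn2
    have hco : ((μ + σ0 : L) : ι → ℝ) = (μ : ι → ℝ) + σ := rfl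
    set x : ι → ℝ := lam0 + (μ : ι → ℝ) + β with hx
    have e1 : lam0 + ((μ : ι → ℝ) + σ) + β = x + σ := by rw [hx]; abel
    have e2 : lam0 + ((μ : ι → ℝ) + σ) + (2⁻¹ : ℝ) • β
        = (lam0 + (μ : ι → ℝ) + (2⁻¹ : ℝ) • β) + σ := by abel
    rw [hco, e1, e2, hppadd x σ, hpmadd x σ]
    have h3 : B (pp x + pp σ) (pp x + pp σ)
        = B (pp x) (pp x) + 2 * B (pp x) (pp σ) + B (pp σ) (pp σ) := by
      rw [hBadd, hBadd', hBadd', hBsymm (pp σ) (pp x)]; ring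
    have h4 : B (pm x + pm σ) (pm x + pm σ)
        = B (pm x) (pm x) + 2 * B (pm x) (pm σ) + B (pm σ) (pm σ) := by
      rw [hBadd, hBadd', hBadd', hBsymm (pm σ) (pm x)]; ring
    have h6 : B x (pp σ) = B (pp x) (pp σ) := by
      have h := hBadd (pp x) (pm x) (pp σ)
      rw [hsum x] at h
      have hz : B (pm x) (pp σ) = 0 := by rw [hBsymm]; exact horth σ x
      rw [h, hz, add_zero]
    have h7 : B x (pm σ) = B (pm x) (pm σ) := by
      have h := hBadd (pp x) (pm x) (pm σ)
      rw [hsum x] at h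
      rw [h, horth x σ, zero_add]
    have h10 : B x ν = B lam0 ν + B (μ : ι → ℝ) ν + B ν β := by
      rw [hx, hBadd, hBadd, hBsymm β ν]
    have h9 : B ((lam0 + (μ : ι → ℝ) + (2⁻¹ : ℝ) • β) + σ) α
        = B (lam0 + (μ : ι → ℝ) + (2⁻¹ : ℝ) • β) α + B σ α := hBadd _ _ _
    rw [h3, h4, h9, pairAdd, pairAdd, pairAdd, pairS, pairS, pairR, h6, h7, h10,
      pairAddL x σ ζ]
    have hσζ : pairC B σ ζ = pairC B σ ζ := rfl
    rw [← my16_eC_add]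
    rw [show
      -(τ * (B (pp σ) (pp σ) : ℂ) / 2)
          - (starRingEnd ℂ) τ * (B (pm σ) (pm σ) : ℂ) / 2
          - pairC B σ ζ + (B ν β : ℂ) + (B σ α : ℂ)
        + (τ * ((B (pp x) (pp x) + 2 * B (pp x) (pp σ) + B (pp σ) (pp σ) : ℝ) : ℂ) / 2
          + (starRingEnd ℂ) τ
              * ((B (pm x) (pm x) + 2 * B (pm x) (pm σ) + B (pm σ) (pm σ) : ℝ) : ℂ) / 2
          + (pairC B x ζ + pairC B σ ζ)
          - ((B (lam0 + (μ : ι → ℝ) + (2⁻¹ : ℝ) • β) α + B σ α : ℝ) : ℂ))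
      = (τ * (B (pp x) (pp x) : ℂ) / 2
          + (starRingEnd ℂ) τ * (B (pm x) (pm x) : ℂ) / 2
          + (pairC B x ζ + τ * (B (pp x) (pp σ) : ℂ)
            + (starRingEnd ℂ) τ * (B (pm x) (pm σ) : ℂ)
            + ((B lam0 ν + B (μ : ι → ℝ) ν + B ν β : ℝ) : ℂ))
          - (B (lam0 + (μ : ι → ℝ) + (2⁻¹ : ℝ) • β) α : ℂ))
        + ((-(n1 + n2) : ℤ) : ℂ) by
        push_cast
        linear_combination -hn1' - hn2']
    rw [my16_eC_add, my16_eC_int, mul_one]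
  rw [thetaChar, thetaChar, ← (Equiv.addRight σ0).tsum_eq
    (fun μ : L => eC (τ * (B (pp (lam0 + (μ : ι → ℝ) + β)) (pp (lam0 + (μ : ι → ℝ) + β)) : ℂ) / 2
      + (starRingEnd ℂ) τ
          * (B (pm (lam0 + (μ : ι → ℝ) + β)) (pm (lam0 + (μ : ι → ℝ) + β)) : ℂ) / 2
      + pairC B (lam0 + (μ : ι → ℝ) + β) ζ
      - (B (lam0 + (μ : ι → ℝ) + (2⁻¹ : ℝ) • β) α : ℂ))), ← tsum_mul_left]
  exact tsum_congr fun μ => by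
    have := key μ
    simpa [Equiv.coe_addRight] using this

end JacobiIndef
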